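/- Let G be a cubic graph with a complete cycle group C, and suppose a new edge is inserted by subdividing two edges e1 and e2 that lie on the same cycle of C and joining the two new subdivision vertices by an edge. Then the resulting graph is cubic and admits a complete cycle group: the cycle containing e1 and e2 splits (or extends) so that both new degree-3 vertices lie on even cycles covering all vertices. -/

import Mathlib

open SimpleGraph

/-- A cycle in a simple graph `G`, given as a closed walk that is a cycle. -/
structure GraphCycle {V : Type*} (G : SimpleGraph V) where
  base : V
  walk : G.Walk base base
  isCycle : walk.IsCycle

/-- A graph is cubic (3-regular) if every vertex has exactly 3 neighbours. -/
def IsCubic {V : Type*} (G : SimpleGraph V) : Prop :=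
  ∀ v : V, (G.neighborSet v).ncard = 3

/-- A complete cycle group (CCG) for `G`: a set of even cycles such that every vertex
lies on exactly one cycle of the set (hence the cycles are pairwise vertex-disjoint
and cover all vertices). -/
def IsCCG {V : Type*} (G : SimpleGraph V) (C : Set (GraphCycle G)) : Prop :=
  (∀ c ∈ C, Even c.walk.length) ∧
  ∀ v : V, ∃! c : GraphCycle G, c ∈ C ∧ v ∈ c.walk.support

/-- A proper edge colouring of `G` with `n` colours: distinct edges of `G` sharing a
vertex receive distinct colours. -/
def ProperEdgeColoring {V : Type*} (G : SimpleGraph V) (n : ℕ) (f : Sym2 V → Fin n) : Prop :=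
  ∀ e₁ ∈ G.edgeSet, ∀ e₂ ∈ G.edgeSet, e₁ ≠ e₂ → (∃ v : V, v ∈ e₁ ∧ v ∈ e₂) → f e₁ ≠ f e₂

namespace Stmt12Aux

open Sum

variable {V : Type*} {G : SimpleGraph V} {G' : SimpleGraph (V ⊕ Fin 2)}

structure SubdivHyp (G : SimpleGraph V) (G' : SimpleGraph (V ⊕ Fin 2)) (e₁ e₂ : Sym2 V) :
    Prop where
  adj1 : ∀ a b : V, s(a, b) = e₁ → G'.Adj (inl a) (inr 0)
  adj2 : ∀ a b : V, s(a, b) = e₂ → G'.Adj (inl a) (inr 1)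
  adjo : ∀ a b : V, G.Adj a b → s(a, b) ≠ e₁ → s(a, b) ≠ e₂ → G'.Adj (inl a) (inl b)

variable {e₁ e₂ : Sym2 V}

open Classical in
noncomputable def subdivWalk (H : SubdivHyp G G' e₁ e₂) :
    ∀ {a b : V}, G.Walk a b → G'.Walk (inl a) (inl b)
  | _, _, .nil => .nil
  | a, _, .cons (v := x) h p =>
    if h1 : s(a, x) = e₁ then
      .cons (H.adj1 a x h1) (.cons ((H.adj1 x a (Sym2.eq_swap.trans h1)).symm) (subdivWalk H p))
    else if h2 : s(a, x) = e₂ then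
      .cons (H.adj2 a x h2) (.cons ((H.adj2 x a (Sym2.eq_swap.trans h2)).symm) (subdivWalk H p))
    else
      .cons (H.adjo a x h h1 h2) (subdivWalk H p)

open Classical in
noncomputable def pieceS (e₁ e₂ : Sym2 V) (d : G.Dart) : List (V ⊕ Fin 2) :=
  if d.edge = e₁ then [inl d.fst, inr 0]
  else if d.edge = e₂ then [inl d.fst, inr 1]
  else [inl d.fst]

open Classical in
noncomputable def pieceE (e₁ e₂ : Sym2 V) (d : G.Dart) : List (Sym2 (V ⊕ Fin 2)) :=
  if d.edge = e₁ then [s(inl d.fst, inr 0), s(inr 0, inl d.snd)]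
  else if d.edge = e₂ then [s(inl d.fst, inr 1), s(inr 1, inl d.snd)]
  else [s(inl d.fst, inl d.snd)]

lemma pieceS_eq₁ {d : G.Dart} (h : d.edge = e₁) :
    pieceS e₁ e₂ d = [inl d.fst, inr 0] := by rw [pieceS, if_pos h]

lemma pieceS_eq₂ {d : G.Dart} (h1 : d.edge ≠ e₁) (h : d.edge = e₂) :
    pieceS e₁ e₂ d = [inl d.fst, inr 1] := by rw [pieceS, if_neg h1, if_pos h]

lemma pieceS_eqo {d : G.Dart} (h1 : d.edge ≠ e₁) (h2 : d.edge ≠ e₂) :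
    pieceS e₁ e₂ d = [inl d.fst] := by rw [pieceS, if_neg h1, if_neg h2]

lemma pieceE_eq₁ {d : G.Dart} (h : d.edge = e₁) :
    pieceE e₁ e₂ d = [s(inl d.fst, inr 0), s(inr 0, inl d.snd)] := by rw [pieceE, if_pos h]

lemma pieceE_eq₂ {d : G.Dart} (h1 : d.edge ≠ e₁) (h : d.edge = e₂) :
    pieceE e₁ e₂ d = [s(inl d.fst, inr 1), s(inr 1, inl d.snd)] := by
  rw [pieceE, if_neg h1, if_pos h]

lemma pieceE_eqo {d : G.Dart} (h1 : d.edge ≠ e₁) (h2 : d.edge ≠ e₂) :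
    pieceE e₁ e₂ d = [s(inl d.fst, inl d.snd)] := by rw [pieceE, if_neg h1, if_neg h2]

lemma dart_mk_edge {a x : V} (h : G.Adj a x) : (Dart.mk (a, x) h).edge = s(a, x) := rfl

lemma dart_edge_eq (d : G.Dart) : d.edge = s(d.fst, d.snd) := rfl

lemma pieceE_nodup (d : G.Dart) : (pieceE e₁ e₂ d).Nodup := by
  have hne := d.adj.ne
  rw [pieceE]; split_ifs <;> simp [Sym2.eq_iff, hne]

lemma pieceS_nodup (d : G.Dart) : (pieceS e₁ e₂ d).Nodup := by
  rw [pieceS]; split_ifs <;> simp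

set_option linter.unreachableTactic false in
set_option linter.unusedTactic false in
lemma pieceE_disjoint {d d' : G.Dart} (hd : d.edge ≠ d'.edge) :
    (pieceE e₁ e₂ d).Disjoint (pieceE e₁ e₂ d') := by
  intro x hx hx'
  rw [pieceE] at hx hx'
  rw [dart_edge_eq d, dart_edge_eq d'] at hd
  split_ifs at hx hx' with h1 h2 h1' h2' <;>
    rw [dart_edge_eq] at * <;> simp_all [Sym2.eq_iff, Prod.ext_iff] <;>
    first
      | tauto
      | (rcases hx with rfl | rfl <;>
          first
            | simp_all [Sym2.eq_iff]
            | tauto)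

set_option linter.unreachableTactic false in
set_option linter.unusedTactic false in
lemma pieceS_disjoint {d d' : G.Dart} (hd : d.edge ≠ d'.edge) (hf : d.fst ≠ d'.fst) :
    (pieceS e₁ e₂ d).Disjoint (pieceS e₁ e₂ d') := by
  intro x hx hx'
  rw [pieceS] at hx hx'
  rw [dart_edge_eq d, dart_edge_eq d'] at hd
  split_ifs at hx hx' with h1 h2 h1' h2' <;>
    rw [dart_edge_eq] at * <;> simp_all [Sym2.eq_iff, Prod.ext_iff] <;>
    first
      | tauto
      | (rcases hx with rfl | rfl <;>
          first
            | simp_all [Sym2.eq_iff]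
            | tauto)

lemma subdivWalk_support (H : SubdivHyp G G' e₁ e₂) :
    ∀ {a b : V} (p : G.Walk a b),
      (subdivWalk H p).support = p.darts.flatMap (pieceS e₁ e₂) ++ [inl b]
  | _, _, .nil => by simp [subdivWalk]
  | a, b, .cons (v := x) h p => by
    rw [subdivWalk]
    split_ifs with h1 h2
    · simp [pieceS_eq₁ (e₂ := e₂) ((dart_mk_edge h).trans h1), subdivWalk_support H p]
    · simp [pieceS_eq₂ (fun hc => h1 ((dart_mk_edge h).symm.trans hc)) ((dart_mk_edge h).trans h2),
        subdivWalk_support H p]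
    · simp [pieceS_eqo (fun hc => h1 ((dart_mk_edge h).symm.trans hc))
        (fun hc => h2 ((dart_mk_edge h).symm.trans hc)), subdivWalk_support H p]

lemma subdivWalk_edges (H : SubdivHyp G G' e₁ e₂) :
    ∀ {a b : V} (p : G.Walk a b),
      (subdivWalk H p).edges = p.darts.flatMap (pieceE e₁ e₂)
  | _, _, .nil => by simp [subdivWalk]
  | a, b, .cons (v := x) h p => by
    rw [subdivWalk]
    split_ifs with h1 h2
    · simp [pieceE_eq₁ (e₂ := e₂) ((dart_mk_edge h).trans h1), subdivWalk_edges H p]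
    · simp [pieceE_eq₂ (fun hc => h1 ((dart_mk_edge h).symm.trans hc)) ((dart_mk_edge h).trans h2),
        subdivWalk_edges H p]
    · simp [pieceE_eqo (fun hc => h1 ((dart_mk_edge h).symm.trans hc))
        (fun hc => h2 ((dart_mk_edge h).symm.trans hc)), subdivWalk_edges H p]

lemma walk_support_eq {a b : V} (p : G.Walk a b) :
    p.support = p.darts.map (·.fst) ++ [b] := by
  induction p with
  | nil => simp
  | cons h p ih => simp [ih]

open Classical in
lemma subdivWalk_length (H : SubdivHyp G G' e₁ e₂) (hne : e₁ ≠ e₂) :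
    ∀ {a b : V} (p : G.Walk a b), p.edges.Nodup →
      (subdivWalk H p).length =
        p.length + (if e₁ ∈ p.edges then 1 else 0) + (if e₂ ∈ p.edges then 1 else 0)
  | _, _, .nil, _ => by simp [subdivWalk]
  | a, b, .cons (v := x) h p, hnd => by
    rw [Walk.edges_cons, List.nodup_cons] at hnd
    obtain ⟨hmem, hnd'⟩ := hnd
    have IH := subdivWalk_length H hne p hnd'
    rw [subdivWalk]
    by_cases h1 : s(a, x) = e₁
    · rw [dif_pos h1]
      have he1p : e₁ ∉ p.edges := fun hh => hmem (by rw [h1]; exact hh)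
      have he1c : e₁ ∈ (Walk.cons h p).edges := by
        rw [Walk.edges_cons, ← h1]; exact List.mem_cons_self
      have he2c : e₂ ∈ (Walk.cons h p).edges ↔ e₂ ∈ p.edges := by
        rw [Walk.edges_cons, List.mem_cons]
        refine ⟨?_, Or.inr⟩
        rintro (hc | hc)
        · exact absurd (hc.trans h1) hne.symm
        · exact hc
      rw [Walk.length_cons, Walk.length_cons, Walk.length_cons, IH, if_pos he1c, if_neg he1p]
      by_cases hm : e₂ ∈ p.edges
      · rw [if_pos (he2c.mpr hm), if_pos hm]
      · rw [if_neg (fun hc => hm (he2c.mp hc)), if_neg hm]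
    · rw [dif_neg h1]
      by_cases h2 : s(a, x) = e₂
      · rw [dif_pos h2]
        have he2p : e₂ ∉ p.edges := fun hh => hmem (by rw [h2]; exact hh)
        have he2c : e₂ ∈ (Walk.cons h p).edges := by
          rw [Walk.edges_cons, ← h2]; exact List.mem_cons_self
        have he1c : e₁ ∈ (Walk.cons h p).edges ↔ e₁ ∈ p.edges := by
          rw [Walk.edges_cons, List.mem_cons]
          refine ⟨?_, Or.inr⟩
          rintro (hc | hc)
          · exact absurd (hc.trans h2) hne
          · exact hc
        rw [Walk.length_cons, Walk.length_cons, Walk.length_cons, IH, if_pos he2c, if_neg he2p]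
        by_cases hm : e₁ ∈ p.edges
        · rw [if_pos (he1c.mpr hm), if_pos hm]
        · rw [if_neg (fun hc => hm (he1c.mp hc)), if_neg hm]
      · rw [dif_neg h2]
        have he1c : e₁ ∈ (Walk.cons h p).edges ↔ e₁ ∈ p.edges := by
          rw [Walk.edges_cons, List.mem_cons]
          refine ⟨?_, Or.inr⟩
          rintro (hc | hc)
          · exact absurd hc.symm h1
          · exact hc
        have he2c : e₂ ∈ (Walk.cons h p).edges ↔ e₂ ∈ p.edges := by
          rw [Walk.edges_cons, List.mem_cons]
          refine ⟨?_, Or.inr⟩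
          rintro (hc | hc)
          · exact absurd hc.symm h2
          · exact hc
        rw [Walk.length_cons, Walk.length_cons, IH]
        by_cases hm1 : e₁ ∈ p.edges <;> by_cases hm2 : e₂ ∈ p.edges
        · rw [if_pos (he1c.mpr hm1), if_pos hm1, if_pos (he2c.mpr hm2), if_pos hm2]
        · rw [if_pos (he1c.mpr hm1), if_pos hm1, if_neg (fun hc => hm2 (he2c.mp hc)), if_neg hm2]
        · rw [if_neg (fun hc => hm1 (he1c.mp hc)), if_neg hm1, if_pos (he2c.mpr hm2), if_pos hm2]
        · rw [if_neg (fun hc => hm1 (he1c.mp hc)), if_neg hm1, if_neg (fun hc => hm2 (he2c.mp hc)), if_neg hm2]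


lemma mem_pieceS {y : V ⊕ Fin 2} {d : G.Dart} (hy : y ∈ pieceS e₁ e₂ d) :
    y = inl d.fst ∨ (y = inr 0 ∧ d.edge = e₁) ∨ (y = inr 1 ∧ d.edge = e₂) := by
  rw [pieceS] at hy
  split_ifs at hy with h1 h2 <;> simp at hy <;> tauto

lemma inl_mem_pieceS (d : G.Dart) : inl d.fst ∈ pieceS e₁ e₂ d := by
  rw [pieceS]; split_ifs <;> simp

lemma inl_mem_subdivWalk_support (H : SubdivHyp G G' e₁ e₂) {a b v : V} (p : G.Walk a b) :
    inl v ∈ (subdivWalk H p).support ↔ v ∈ p.support := by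
  rw [subdivWalk_support, walk_support_eq p]
  simp only [List.mem_append, List.mem_flatMap, List.mem_map, List.mem_singleton]
  constructor
  · rintro (⟨d, hd, hy⟩ | hy)
    · rcases mem_pieceS hy with h | ⟨h, _⟩ | ⟨h, _⟩
      · exact Or.inl ⟨d, hd, (inl_injective h.symm)⟩
      · exact absurd h (by simp)
      · exact absurd h (by simp)
    · exact Or.inr (inl_injective hy)
  · rintro (⟨d, hd, rfl⟩ | rfl)
    · exact Or.inl ⟨d, hd, inl_mem_pieceS d⟩
    · exact Or.inr rfl

lemma inr0_mem_subdivWalk_support (H : SubdivHyp G G' e₁ e₂) {a b : V} (p : G.Walk a b) :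
    inr 0 ∈ (subdivWalk H p).support ↔ e₁ ∈ p.edges := by
  rw [subdivWalk_support]
  simp only [List.mem_append, List.mem_flatMap, List.mem_singleton]
  constructor
  · rintro (⟨d, hd, hy⟩ | hy)
    · rcases mem_pieceS hy with h | ⟨_, h⟩ | ⟨h, _⟩
      · exact absurd h (by simp)
      · exact h ▸ List.mem_map_of_mem (f := Dart.edge) hd
      · exact absurd h (by simp)
    · exact absurd hy (by simp)
  · intro hmem
    obtain ⟨d, hd, hde⟩ := List.mem_map.mp (hmem : e₁ ∈ p.darts.map Dart.edge)
    exact Or.inl ⟨d, hd, by rw [pieceS_eq₁ hde]; simp⟩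

lemma inr1_mem_subdivWalk_support (H : SubdivHyp G G' e₁ e₂) (hne : e₁ ≠ e₂) {a b : V}
    (p : G.Walk a b) :
    inr 1 ∈ (subdivWalk H p).support ↔ e₂ ∈ p.edges := by
  rw [subdivWalk_support]
  simp only [List.mem_append, List.mem_flatMap, List.mem_singleton]
  constructor
  · rintro (⟨d, hd, hy⟩ | hy)
    · rcases mem_pieceS hy with h | ⟨h, _⟩ | ⟨_, h⟩
      · exact absurd h (by simp)
      · exact absurd h (by simp)
      · exact h ▸ List.mem_map_of_mem (f := Dart.edge) hd
    · exact absurd hy (by simp)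
  · intro hmem
    obtain ⟨d, hd, hde⟩ := List.mem_map.mp (hmem : e₂ ∈ p.darts.map Dart.edge)
    refine Or.inl ⟨d, hd, ?_⟩
    rw [pieceS_eq₂ (fun hc => hne (hc.symm.trans hde)) hde]
    simp

lemma cycle_support_dropLast_nodup {a : V} {p : G.Walk a a} (hp : p.IsCycle) :
    p.support.dropLast.Nodup := by
  have htail : p.support.tail.Nodup := hp.support_nodup
  have hlen : p.support.tail.length = p.length := by
    have := p.length_support
    have : p.support.tail.length = p.support.length - 1 := by simp
    omega
  have hne : p.support.tail ≠ [] := by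
    have h3 := hp.three_le_length
    intro hc
    rw [hc] at hlen
    simp at hlen
    omega
  rw [p.support_eq_cons, List.dropLast_cons_of_ne_nil hne]
  refine List.nodup_cons.mpr ⟨?_, (List.dropLast_sublist _).nodup htail⟩
  intro hmem
  have hlast : p.support.tail.getLast hne = a := by
    rw [List.getLast_tail]
    exact p.getLast_support
  have h2 : (p.support.tail.dropLast ++ [p.support.tail.getLast hne]).Nodup := by
    rw [List.dropLast_append_getLast hne]; exact htail
  rw [hlast] at h2
  exact (List.nodup_append'.mp h2).2.2 hmem (List.mem_singleton.mpr rfl)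


lemma subdivWalk_isCycle (H : SubdivHyp G G' e₁ e₂) {a : V} {p : G.Walk a a}
    (hp : p.IsCycle) : (subdivWalk H p).IsCycle := by
  have hdedge : p.darts.Pairwise (fun d d' => d.edge ≠ d'.edge) :=
    List.pairwise_map.mp (hp.isTrail.edges_nodup : (p.darts.map Dart.edge).Pairwise (· ≠ ·))
  have hdfst : p.darts.Pairwise (fun d d' => d.fst ≠ d'.fst) := by
    have hdl := cycle_support_dropLast_nodup hp
    rw [← Walk.map_fst_darts] at hdl
    exact List.pairwise_map.mp hdl
  have hE : (subdivWalk H p).edges.Nodup := by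
    rw [subdivWalk_edges]
    exact List.nodup_flatMap.mpr
      ⟨fun d _ => pieceE_nodup d, hdedge.imp (fun h => pieceE_disjoint h)⟩
  have hS : (p.darts.flatMap (pieceS e₁ e₂)).Nodup :=
    List.nodup_flatMap.mpr ⟨fun d _ => pieceS_nodup d,
      (hdedge.and hdfst).imp (fun h => pieceS_disjoint h.1 h.2)⟩
  obtain ⟨d₀, ds, hds, hfst⟩ : ∃ d ds, p.darts = d :: ds ∧ d.fst = a := by
    cases p with
    | nil => exact absurd rfl hp.ne_nil
    | cons h q => exact ⟨_, _, Walk.darts_cons h q, rfl⟩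
  obtain ⟨r, hr⟩ : ∃ r, pieceS e₁ e₂ d₀ = inl a :: r := by
    rw [pieceS]; split_ifs <;> exact ⟨_, by rw [hfst]⟩
  have hsup := subdivWalk_support H p
  rw [hds, List.flatMap_cons, hr] at hsup
  rw [hds, List.flatMap_cons, hr] at hS
  refine ⟨⟨⟨hE⟩, ?_⟩, ?_⟩
  · intro hnil
    rw [hnil] at hsup
    simp at hsup
  · rw [hsup]
    simp only [List.cons_append, List.tail_cons] at hS ⊢
    rw [List.nodup_cons] at hS
    refine List.nodup_append'.mpr ⟨hS.2, List.nodup_singleton _, ?_⟩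
    intro y hy hy'
    rw [List.mem_singleton] at hy'
    exact hS.1 (hy' ▸ hy)


lemma ncard_none {W : Type*} {N : Set W} (hN : N.ncard = 3) :
    ((inl '' N : Set (W ⊕ Fin 2))).ncard = 3 := by
  rw [Set.ncard_image_of_injective N inl_injective]; exact hN

lemma ncard_one {W : Type*} {N : Set W} (hN : N.ncard = 3) {z : W} (hz : z ∈ N) (i : Fin 2) :
    ((inl '' (N \ {z}) ∪ {inr i} : Set (W ⊕ Fin 2))).ncard = 3 := by
  have hfin : N.Finite := Set.finite_of_ncard_ne_zero (by rw [hN]; norm_num)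
  rw [Set.ncard_union_eq (by simp) ((hfin.diff.image _)) (Set.finite_singleton _)]
  rw [Set.ncard_image_of_injective _ inl_injective, Set.ncard_diff_singleton_of_mem hz,
    hN, Set.ncard_singleton]

lemma ncard_two {W : Type*} {N : Set W} (hN : N.ncard = 3) {z₁ z₂ : W} (hz₁ : z₁ ∈ N)
    (hz₂ : z₂ ∈ N) (h12 : z₁ ≠ z₂) :
    ((inl '' (N \ {z₁, z₂}) ∪ {inr 0, inr 1} : Set (W ⊕ Fin 2))).ncard = 3 := by
  have hfin : N.Finite := Set.finite_of_ncard_ne_zero (by rw [hN]; norm_num)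
  rw [Set.ncard_union_eq (Set.disjoint_left.mpr (by rintro _ ⟨z, _, rfl⟩ h; simp at h))
    ((hfin.diff.image _)) ((Set.finite_singleton _).insert _)]
  rw [Set.ncard_image_of_injective _ inl_injective,
    Set.ncard_diff (by simp [Set.insert_subset_iff, hz₁, hz₂]) (Set.toFinite _),
    Set.ncard_pair h12, Set.ncard_pair (inr_injective.ne (by decide) : (inr 0 : W ⊕ Fin 2) ≠ inr 1), hN]

lemma map_inl_ne_inr {W : Type*} (e : Sym2 W) (i : Fin 2) (y : W ⊕ Fin 2) :
    Sym2.map inl e ≠ s(inr i, y) := by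
  induction e using Sym2.ind with
  | _ p q => rw [Sym2.map_pair_eq]; simp [Sym2.eq_iff]


end Stmt12Aux

open Sum in
/-- Edge insertion (H-insertion): let `G` be a cubic graph with a complete cycle group `C`
and let `e₁ = s(u₁,v₁)` and `e₂ = s(u₂,v₂)` be two distinct edges lying on the same cycle
`c₀` of `C`.  Subdivide `e₁` and `e₂` by new vertices (`Sum.inr 0` and `Sum.inr 1`) and join
the two new vertices by a new edge.  Then the resulting graph `G'` is cubic and admits a
complete cycle group (even cycles covering all vertices, in particular the two new
degree-3 vertices). -/
theorem stmt12 {V : Type*} (G : SimpleGraph V) (hG : IsCubic G)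
    (C : Set (GraphCycle G)) (hC : IsCCG G C)
    (c₀ : GraphCycle G) (hc₀ : c₀ ∈ C)
    (u₁ v₁ u₂ v₂ : V)
    (he₁ : s(u₁, v₁) ∈ c₀.walk.edges) (he₂ : s(u₂, v₂) ∈ c₀.walk.edges)
    (hne : s(u₁, v₁) ≠ s(u₂, v₂))
    (G' : SimpleGraph (V ⊕ Fin 2))
    (hG' : G' = SimpleGraph.fromEdgeSet
      ((Sym2.map Sum.inl '' (G.edgeSet \ {s(u₁, v₁), s(u₂, v₂)})) ∪
        {s(Sum.inl u₁, Sum.inr 0), s(Sum.inl v₁, Sum.inr 0),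
         s(Sum.inl u₂, Sum.inr 1), s(Sum.inl v₂, Sum.inr 1),
         s(Sum.inr 0, Sum.inr 1)})) :
    IsCubic G' ∧ ∃ C' : Set (GraphCycle G'), IsCCG G' C' := by
  classical
  have hadj1 : G.Adj u₁ v₁ := G.mem_edgeSet.mp (c₀.walk.edges_subset_edgeSet he₁)
  have hadj2 : G.Adj u₂ v₂ := G.mem_edgeSet.mp (c₀.walk.edges_subset_edgeSet he₂)
  have H : Stmt12Aux.SubdivHyp G G' s(u₁, v₁) s(u₂, v₂) := by
    subst hG'
    constructor
    · intro a b hab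
      rw [fromEdgeSet_adj]
      refine ⟨Or.inr ?_, by simp⟩
      rcases Sym2.eq_iff.mp hab with ⟨rfl, rfl⟩ | ⟨rfl, rfl⟩ <;> simp
    · intro a b hab
      rw [fromEdgeSet_adj]
      refine ⟨Or.inr ?_, by simp⟩
      rcases Sym2.eq_iff.mp hab with ⟨rfl, rfl⟩ | ⟨rfl, rfl⟩ <;> simp
    · intro a b hab h1 h2
      rw [fromEdgeSet_adj]
      exact ⟨Or.inl ⟨s(a, b), ⟨hab, by simp [h1, h2]⟩, by simp⟩, by simp [hab.ne]⟩
  -- the edges e₁, e₂ belong only to the cycle c₀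
  have hmem_iff : ∀ c ∈ C, (s(u₁, v₁) ∈ c.walk.edges → c = c₀) ∧
      (s(u₂, v₂) ∈ c.walk.edges → c = c₀) := by
    intro c hcC
    constructor
    · intro hmem
      obtain ⟨cu, _, hu⟩ := hC.2 u₁
      rw [hu c ⟨hcC, c.walk.fst_mem_support_of_mem_edges hmem⟩,
        hu c₀ ⟨hc₀, c₀.walk.fst_mem_support_of_mem_edges he₁⟩]
    · intro hmem
      obtain ⟨cu, _, hu⟩ := hC.2 u₂
      rw [hu c ⟨hcC, c.walk.fst_mem_support_of_mem_edges hmem⟩,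
        hu c₀ ⟨hc₀, c₀.walk.fst_mem_support_of_mem_edges he₂⟩]
  refine ⟨?_, ?_⟩
  · -- cubic
    intro x
    cases x with
    | inl w =>
      have hsetw : G'.neighborSet (inl w) =
          (inl '' {z | G.Adj w z ∧ s(w, z) ≠ s(u₁, v₁) ∧ s(w, z) ≠ s(u₂, v₂)}) ∪
            ((if w = u₁ ∨ w = v₁ then {inr 0} else (∅ : Set (V ⊕ Fin 2))) ∪
             (if w = u₂ ∨ w = v₂ then {inr 1} else ∅)) := by
        ext y
        rw [mem_neighborSet, hG', fromEdgeSet_adj]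
        constructor
        · rintro ⟨hmem, hxy⟩
          rcases hmem with ⟨e, ⟨heE, heD⟩, hmap⟩ | hmem
          · simp only [Set.mem_insert_iff, Set.mem_singleton_iff] at heD
            push_neg at heD
            induction e using Sym2.ind with
            | _ p q =>
              rw [Sym2.map_pair_eq] at hmap
              rcases Sym2.eq_iff.mp hmap with ⟨hp, hq⟩ | ⟨hp, hq⟩
              · obtain rfl : p = w := inl_injective hp
                exact Or.inl ⟨q, ⟨heE, heD.1, heD.2⟩, hq⟩
              · obtain rfl : q = w := inl_injective hq
                refine Or.inl ⟨p, ⟨(G.mem_edgeSet.mp heE).symm,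
                  fun hc => heD.1 (Sym2.eq_swap.trans hc),
                  fun hc => heD.2 (Sym2.eq_swap.trans hc)⟩, hp⟩
          · simp only [Set.mem_insert_iff, Set.mem_singleton_iff, Sym2.eq_iff] at hmem
            simp at hmem
            simp only [Set.mem_union]
            rcases hmem with ⟨rfl, rfl⟩ | ⟨rfl, rfl⟩ | ⟨rfl, rfl⟩ | ⟨rfl, rfl⟩ <;>
              first
                | (refine Or.inr (Or.inl ?_); rw [if_pos (by tauto)]; exact rfl)
                | (refine Or.inr (Or.inr ?_); rw [if_pos (by tauto)]; exact rfl)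
        · intro hy
          simp only [Set.mem_union, Set.mem_image, Set.mem_setOf_eq] at hy
          rcases hy with ⟨z, ⟨hz1, hz2, hz3⟩, rfl⟩ | hy | hy
          · exact ⟨Or.inl ⟨s(w, z), ⟨hz1, by simp [hz2, hz3]⟩, by rw [Sym2.map_pair_eq]⟩,
              by simp [hz1.ne]⟩
          · split_ifs at hy with hc
            · rw [Set.mem_singleton_iff] at hy; subst hy
              refine ⟨Or.inr ?_, by simp⟩
              rcases hc with rfl | rfl <;> simp
            · exact absurd hy (Set.notMem_empty _)
          · split_ifs at hy with hc
            · rw [Set.mem_singleton_iff] at hy; subst hy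
              refine ⟨Or.inr ?_, by simp⟩
              rcases hc with rfl | rfl <;> simp
            · exact absurd hy (Set.notMem_empty _)
      by_cases hw1 : w = u₁ ∨ w = v₁ <;> by_cases hw2 : w = u₂ ∨ w = v₂
      · obtain ⟨z₁, hz₁a, hz₁e⟩ : ∃ z, G.Adj w z ∧ s(w, z) = s(u₁, v₁) := by
          rcases hw1 with rfl | rfl
          exacts [⟨v₁, hadj1, rfl⟩, ⟨u₁, hadj1.symm, Sym2.eq_swap⟩]
        obtain ⟨z₂, hz₂a, hz₂e⟩ : ∃ z, G.Adj w z ∧ s(w, z) = s(u₂, v₂) := by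
          rcases hw2 with rfl | rfl
          exacts [⟨v₂, hadj2, rfl⟩, ⟨u₂, hadj2.symm, Sym2.eq_swap⟩]
        have h12 : z₁ ≠ z₂ := fun hc => hne (hz₁e.symm.trans (by rw [hc, hz₂e]))
        have hAeq : {z | G.Adj w z ∧ s(w, z) ≠ s(u₁, v₁) ∧ s(w, z) ≠ s(u₂, v₂)} =
            G.neighborSet w \ {z₁, z₂} := by
          ext z
          simp only [Set.mem_setOf_eq, Set.mem_diff, mem_neighborSet, Set.mem_insert_iff,
            Set.mem_singleton_iff]
          constructor
          · rintro ⟨ha, h1, h2⟩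
            refine ⟨ha, ?_⟩
            rintro (rfl | rfl)
            exacts [h1 hz₁e, h2 hz₂e]
          · rintro ⟨ha, hz⟩
            refine ⟨ha, fun hc => hz (Or.inl ?_), fun hc => hz (Or.inr ?_)⟩
            · exact Sym2.congr_right.mp (hc.trans hz₁e.symm)
            · exact Sym2.congr_right.mp (hc.trans hz₂e.symm)
        rw [hsetw, if_pos hw1, if_pos hw2, hAeq, Set.singleton_union]
        exact Stmt12Aux.ncard_two (hG w) hz₁a hz₂a h12
      · obtain ⟨z₁, hz₁a, hz₁e⟩ : ∃ z, G.Adj w z ∧ s(w, z) = s(u₁, v₁) := by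
          rcases hw1 with rfl | rfl
          exacts [⟨v₁, hadj1, rfl⟩, ⟨u₁, hadj1.symm, Sym2.eq_swap⟩]
        have hAeq : {z | G.Adj w z ∧ s(w, z) ≠ s(u₁, v₁) ∧ s(w, z) ≠ s(u₂, v₂)} =
            G.neighborSet w \ {z₁} := by
          ext z
          simp only [Set.mem_setOf_eq, Set.mem_diff, mem_neighborSet, Set.mem_singleton_iff]
          constructor
          · rintro ⟨ha, h1, _⟩
            exact ⟨ha, fun hc => h1 (hc ▸ hz₁e)⟩
          · rintro ⟨ha, hz⟩
            refine ⟨ha, fun hc => hz (Sym2.congr_right.mp (hc.trans hz₁e.symm)), fun hc => hw2 ?_⟩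
            rcases Sym2.eq_iff.mp hc with ⟨rfl, _⟩ | ⟨rfl, _⟩
            · exact Or.inl rfl
            · exact Or.inr rfl
        rw [hsetw, if_pos hw1, if_neg hw2, Set.union_empty, hAeq]
        exact Stmt12Aux.ncard_one (hG w) hz₁a 0
      · obtain ⟨z₂, hz₂a, hz₂e⟩ : ∃ z, G.Adj w z ∧ s(w, z) = s(u₂, v₂) := by
          rcases hw2 with rfl | rfl
          exacts [⟨v₂, hadj2, rfl⟩, ⟨u₂, hadj2.symm, Sym2.eq_swap⟩]
        have hAeq : {z | G.Adj w z ∧ s(w, z) ≠ s(u₁, v₁) ∧ s(w, z) ≠ s(u₂, v₂)} =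
            G.neighborSet w \ {z₂} := by
          ext z
          simp only [Set.mem_setOf_eq, Set.mem_diff, mem_neighborSet, Set.mem_singleton_iff]
          constructor
          · rintro ⟨ha, _, h2⟩
            exact ⟨ha, fun hc => h2 (hc ▸ hz₂e)⟩
          · rintro ⟨ha, hz⟩
            refine ⟨ha, fun hc => hw1 ?_, fun hc => hz (Sym2.congr_right.mp (hc.trans hz₂e.symm))⟩
            rcases Sym2.eq_iff.mp hc with ⟨rfl, _⟩ | ⟨rfl, _⟩
            · exact Or.inl rfl
            · exact Or.inr rfl
        rw [hsetw, if_neg hw1, if_pos hw2, Set.empty_union, hAeq]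
        exact Stmt12Aux.ncard_one (hG w) hz₂a 1
      · have hAeq : {z | G.Adj w z ∧ s(w, z) ≠ s(u₁, v₁) ∧ s(w, z) ≠ s(u₂, v₂)} =
            G.neighborSet w := by
          ext z
          simp only [Set.mem_setOf_eq, mem_neighborSet]
          constructor
          · rintro ⟨ha, _, _⟩; exact ha
          · intro ha
            refine ⟨ha, fun hc => hw1 ?_, fun hc => hw2 ?_⟩
            · rcases Sym2.eq_iff.mp hc with ⟨rfl, _⟩ | ⟨rfl, _⟩
              · exact Or.inl rfl
              · exact Or.inr rfl
            · rcases Sym2.eq_iff.mp hc with ⟨rfl, _⟩ | ⟨rfl, _⟩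
              · exact Or.inl rfl
              · exact Or.inr rfl
        rw [hsetw, if_neg hw1, if_neg hw2, Set.union_empty, Set.union_empty, hAeq]
        exact Stmt12Aux.ncard_none (hG w)
    | inr i =>
      have hi : i = 0 ∨ i = 1 := by omega
      rcases hi with rfl | rfl
      · have hset : G'.neighborSet (inr 0) = {inl u₁, inl v₁, inr 1} := by
          ext y
          rw [mem_neighborSet, hG', fromEdgeSet_adj]
          constructor
          · rintro ⟨hmem, hxy⟩
            rcases hmem with ⟨e, _, hmap⟩ | hmem
            · exact absurd hmap (Stmt12Aux.map_inl_ne_inr e 0 y)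
            · simp [Sym2.eq_iff] at hmem ⊢
              tauto
          · intro hy
            simp only [Set.mem_insert_iff, Set.mem_singleton_iff] at hy
            rcases hy with rfl | rfl | rfl <;> exact ⟨Or.inr (by simp), by simp⟩
        rw [hset]
        exact Set.ncard_eq_three.mpr ⟨_, _, _, by simp [hadj1.ne], by simp, by simp, rfl⟩
      · have hset : G'.neighborSet (inr 1) = {inl u₂, inl v₂, inr 0} := by
          ext y
          rw [mem_neighborSet, hG', fromEdgeSet_adj]
          constructor
          · rintro ⟨hmem, hxy⟩
            rcases hmem with ⟨e, _, hmap⟩ | hmem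
            · exact absurd hmap (Stmt12Aux.map_inl_ne_inr e 1 y)
            · simp [Sym2.eq_iff] at hmem ⊢
              tauto
          · intro hy
            simp only [Set.mem_insert_iff, Set.mem_singleton_iff] at hy
            rcases hy with rfl | rfl | rfl <;> exact ⟨Or.inr (by simp), by simp⟩
        rw [hset]
        exact Set.ncard_eq_three.mpr ⟨_, _, _, by simp [hadj2.ne], by simp, by simp, rfl⟩
  · refine ⟨(fun c : GraphCycle G =>
      (⟨inl c.base, Stmt12Aux.subdivWalk H c.walk,
        Stmt12Aux.subdivWalk_isCycle H c.isCycle⟩ : GraphCycle G')) '' C, ?_, ?_⟩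
    · rintro c' ⟨c, hcC, rfl⟩
      simp only
      rw [Stmt12Aux.subdivWalk_length H hne c.walk c.isCycle.isTrail.edges_nodup]
      by_cases hc : c = c₀
      · subst hc
        rw [if_pos he₁, if_pos he₂]
        obtain ⟨k, hk⟩ := hC.1 c hcC
        exact ⟨k + 1, by omega⟩
      · rw [if_neg (fun hm => hc ((hmem_iff c hcC).1 hm)),
          if_neg (fun hm => hc ((hmem_iff c hcC).2 hm))]
        exact hC.1 c hcC
    · intro w
      match w with
      | inl v =>
        obtain ⟨c, ⟨hcC, hcv⟩, huc⟩ := hC.2 v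
        refine ⟨⟨inl c.base, Stmt12Aux.subdivWalk H c.walk,
          Stmt12Aux.subdivWalk_isCycle H c.isCycle⟩,
          ⟨⟨c, hcC, rfl⟩, (Stmt12Aux.inl_mem_subdivWalk_support H c.walk).mpr hcv⟩, ?_⟩
        rintro c'' ⟨⟨c₂, hc₂C, rfl⟩, hmem₂⟩
        have : c₂ = c :=
          huc c₂ ⟨hc₂C, (Stmt12Aux.inl_mem_subdivWalk_support H c₂.walk).mp hmem₂⟩
        rw [this]
      | inr i =>
        have hi : i = 0 ∨ i = 1 := by omega
        rcases hi with rfl | rfl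
        · refine ⟨⟨inl c₀.base, Stmt12Aux.subdivWalk H c₀.walk,
            Stmt12Aux.subdivWalk_isCycle H c₀.isCycle⟩,
            ⟨⟨c₀, hc₀, rfl⟩, (Stmt12Aux.inr0_mem_subdivWalk_support H c₀.walk).mpr he₁⟩, ?_⟩
          rintro c'' ⟨⟨c₂, hc₂C, rfl⟩, hmem₂⟩
          have : c₂ = c₀ := (hmem_iff c₂ hc₂C).1
            ((Stmt12Aux.inr0_mem_subdivWalk_support H c₂.walk).mp hmem₂)
          rw [this]
        · refine ⟨⟨inl c₀.base, Stmt12Aux.subdivWalk H c₀.walk,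
            Stmt12Aux.subdivWalk_isCycle H c₀.isCycle⟩,
            ⟨⟨c₀, hc₀, rfl⟩,
              (Stmt12Aux.inr1_mem_subdivWalk_support H hne c₀.walk).mpr he₂⟩, ?_⟩
          rintro c'' ⟨⟨c₂, hc₂C, rfl⟩, hmem₂⟩
          have : c₂ = c₀ := (hmem_iff c₂ hc₂C).2
            ((Stmt12Aux.inr1_mem_subdivWalk_support H hne c₂.walk).mp hmem₂)
          rw [this]
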